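/- Let β ∈ (0,1) be a real number, n ≥ 1 and N natural numbers, x : Fin n → Fin N → Bool the experts' predictions, and c : Fin N → Bool the correct labels. For an expert i and a time t ≤ N, let mist i t denote the number of trials j < t with x i j ≠ c j, let w i t = β^(mist i t), and let W t = ∑_{i} w i t. For each trial t, let F t = (∑_{i : x i t ≠ c t} w i t) / W t. Then the final total weight satisfies W N = n * ∏_{t < N} (1 - (1-β) * F t). -/
import Mathlib

/-- Number of mistakes expert `i` made during the first `t` trials. -/
def mist {n N : ℕ} (x : Fin n → Fin N → Bool) (c : Fin N → Bool)
    (i : Fin n) (t : ℕ) : ℕ :=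
  (Finset.univ.filter (fun j : Fin N => (j : ℕ) < t ∧ x i j ≠ c j)).card

/-- Weight of expert `i` just before trial `t`. -/
noncomputable def w (β : ℝ) {n N : ℕ} (x : Fin n → Fin N → Bool) (c : Fin N → Bool)
    (i : Fin n) (t : ℕ) : ℝ :=
  β ^ (mist x c i t)

/-- Total weight just before trial `t`. -/
noncomputable def W (β : ℝ) {n N : ℕ} (x : Fin n → Fin N → Bool) (c : Fin N → Bool)
    (t : ℕ) : ℝ :=
  ∑ i : Fin n, w β x c i t

/-- Fraction of the total weight placed on the wrong answer at trial `t`. -/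
noncomputable def F (β : ℝ) {n N : ℕ} (x : Fin n → Fin N → Bool) (c : Fin N → Bool)
    (t : Fin N) : ℝ :=
  (∑ i ∈ Finset.univ.filter (fun i : Fin n => x i t ≠ c t), w β x c i (t : ℕ)) /
    W β x c (t : ℕ)

lemma mist_succ {n N : ℕ} (x : Fin n → Fin N → Bool) (c : Fin N → Bool)
    (i : Fin n) (t : Fin N) :
    mist x c i (t + 1) = mist x c i t + (if x i t = c t then 0 else 1) := by
  unfold mist
  have hiff : ∀ j : Fin N, ((j : ℕ) < (t : ℕ) + 1 ∧ x i j ≠ c j) ↔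
      (((j : ℕ) < (t : ℕ) ∧ x i j ≠ c j) ∨ (j = t ∧ x i j ≠ c j)) := by
    intro j
    constructor
    · rintro ⟨hj, hm⟩
      rcases Nat.lt_succ_iff_lt_or_eq.1 hj with h | h
      · exact Or.inl ⟨h, hm⟩
      · exact Or.inr ⟨Fin.ext h, hm⟩
    · rintro (⟨hj, hm⟩ | ⟨rfl, hm⟩)
      · exact ⟨Nat.lt_succ_of_lt hj, hm⟩
      · exact ⟨Nat.lt_succ_self _, hm⟩
  rw [Finset.filter_congr (fun j _ => hiff j), Finset.filter_or,
    Finset.card_union_of_disjoint]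
  · congr 1
    by_cases h : x i t = c t
    · rw [Finset.filter_eq_empty_iff.2 (by simp +contextual [h])]
      simp [h]
    · rw [show (Finset.univ.filter fun j : Fin N => j = t ∧ x i j ≠ c j) = {t} by
        ext j; simp +contextual [h]]
      simp [h]
  · rw [Finset.disjoint_filter]
    rintro j _ ⟨hj, _⟩ ⟨rfl, _⟩
    exact lt_irrefl _ hj

lemma Wpos (β : ℝ) (hβ0 : 0 < β) {n N : ℕ} (hn : 1 ≤ n)
    (x : Fin n → Fin N → Bool) (c : Fin N → Bool) (t : ℕ) :
    0 < W β x c t := by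
  have : (Finset.univ : Finset (Fin n)).Nonempty := Finset.univ_nonempty_iff.2
    (Fin.pos_iff_nonempty.1 hn)
  exact Finset.sum_pos (fun i _ => pow_pos hβ0 _) this

lemma W_succ (β : ℝ) (hβ0 : 0 < β) {n N : ℕ} (hn : 1 ≤ n)
    (x : Fin n → Fin N → Bool) (c : Fin N → Bool) (t : Fin N) :
    W β x c ((t : ℕ) + 1) = W β x c t * (1 - (1 - β) * F β x c t) := by
  have hW : W β x c (t : ℕ) ≠ 0 := (Wpos β hβ0 hn x c t).ne'
  have hw : ∀ i, w β x c i ((t : ℕ) + 1) = w β x c i t * (if x i t = c t then 1 else β) := by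
    intro i
    simp only [w, mist_succ, pow_add]
    split <;> simp
  have hsplit : W β x c ((t : ℕ) + 1) =
      W β x c t - (1 - β) * ∑ i ∈ Finset.univ.filter (fun i : Fin n => x i t ≠ c t),
        w β x c i (t : ℕ) := by
    unfold W
    simp only [hw]
    rw [← Finset.sum_filter_add_sum_filter_not Finset.univ (fun i : Fin n => x i t ≠ c t)
      (fun i => w β x c i t * (if x i t = c t then 1 else β)),
      ← Finset.sum_filter_add_sum_filter_not Finset.univ (fun i : Fin n => x i t ≠ c t)
      (fun i => w β x c i t)]
    have h1 : ∀ i ∈ Finset.univ.filter (fun i : Fin n => x i t ≠ c t),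
        w β x c i t * (if x i t = c t then 1 else β) = w β x c i t * β := by
      intro i hi; rw [Finset.mem_filter] at hi; simp [hi.2]
    have h2 : ∀ i ∈ Finset.univ.filter (fun i : Fin n => ¬ x i t ≠ c t),
        w β x c i t * (if x i t = c t then 1 else β) = w β x c i t := by
      intro i hi; rw [Finset.mem_filter] at hi
      have := not_not.1 hi.2; simp [this]
    rw [Finset.sum_congr rfl h1, Finset.sum_congr rfl h2, ← Finset.sum_mul]
    ring
  rw [hsplit, F]
  field_simp

theorem rwm_final_weight_product
    (β : ℝ) (hβ0 : 0 < β) (hβ1 : β < 1)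
    (n N : ℕ) (hn : 1 ≤ n)
    (x : Fin n → Fin N → Bool) (c : Fin N → Bool) :
    W β x c N = (n : ℝ) * ∏ t : Fin N, (1 - (1 - β) * F β x c t) := by
  have key : ∀ k, k ≤ N → W β x c k =
      (n : ℝ) * ∏ t ∈ Finset.univ.filter (fun t : Fin N => (t : ℕ) < k),
        (1 - (1 - β) * F β x c t) := by
    intro k
    induction k with
    | zero =>
      intro _
      have : ∀ i : Fin n, w β x c i 0 = 1 := by
        intro i
        simp [w, mist]
      simp [W, this]
    | succ k ih =>
      intro hk
      have hkN : k < N := hk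
      have ht : W β x c (k + 1) = W β x c k * (1 - (1 - β) * F β x c ⟨k, hkN⟩) :=
        W_succ β hβ0 hn x c ⟨k, hkN⟩
      have hfilter : (Finset.univ.filter (fun t : Fin N => (t : ℕ) < k + 1)) =
          insert ⟨k, hkN⟩ (Finset.univ.filter (fun t : Fin N => (t : ℕ) < k)) := by
        ext j
        simp only [Finset.mem_insert, Finset.mem_filter, Finset.mem_univ, true_and]
        constructor
        · intro hj
          rcases Nat.lt_succ_iff_lt_or_eq.1 hj with h | h
          · exact Or.inr h
          · exact Or.inl (Fin.ext h)
        · rintro (rfl | h)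
          · exact Nat.lt_succ_self _
          · exact Nat.lt_succ_of_lt h
      rw [ht, ih (le_of_lt hk), hfilter, Finset.prod_insert (by simp)]
      ring
  have := key N le_rfl
  rwa [show (Finset.univ.filter (fun t : Fin N => (t : ℕ) < N)) = Finset.univ by
    ext j; simp [j.isLt]] at this
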